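/- The second mixed derivatives of the local discrepancy with respect to the core vector at (c,j) are constant and equal to the Gauss–Newton matrix: for every v : Fin r → ℝ and β, γ ∈ Fin r, the derivative at t = 0 of t ↦ (derivative at s = 0 of s ↦ ε_{c,j}(Q[c,j := v + t·e_β + s·e_γ])) equals H(β,γ) = (1/N^{d−1}) ∑_{i : i(c) = j} (∏_{s ≠ c} Q(s)(β)(i(s))) · (∏_{s ≠ c} Q(s)(γ)(i(s))); in particular it does not depend on v. -/

import Mathlib

open Finset

/-- Canonical-decomposition approximation:
`F(Q)(i) = ∑ α, ∏ s, Q s α (i s)`. -/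
noncomputable def capF (d N r : ℕ) (Q : Fin d → Fin r → Fin N → ℝ)
    (i : Fin d → Fin N) : ℝ :=
  ∑ α : Fin r, ∏ s : Fin d, Q s α (i s)

/-- Residual `R(Q)(i) = F(Q)(i) - T(i)`. -/
noncomputable def resid (d N r : ℕ) (T : (Fin d → Fin N) → ℝ)
    (Q : Fin d → Fin r → Fin N → ℝ) (i : Fin d → Fin N) : ℝ :=
  capF d N r Q i - T i

/-- Global discrepancy `ε_Σ(Q) = (1/(2 N^d)) ∑ i, R(Q)(i)^2`. -/
noncomputable def epsGlobal (d N r : ℕ) (T : (Fin d → Fin N) → ℝ)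
    (Q : Fin d → Fin r → Fin N → ℝ) : ℝ :=
  (1 / (2 * (N : ℝ) ^ d)) * ∑ i : Fin d → Fin N, (resid d N r T Q i) ^ 2

/-- Local discrepancy on the hyperplane `i c = j`:
`ε_{c,j}(Q) = (1/(2 N^(d-1))) ∑_{i : i c = j} R(Q)(i)^2`. -/
noncomputable def epsLocal (d N r : ℕ) (T : (Fin d → Fin N) → ℝ)
    (Q : Fin d → Fin r → Fin N → ℝ) (c : Fin d) (j : Fin N) : ℝ :=
  (1 / (2 * (N : ℝ) ^ (d - 1))) *
    ∑ i ∈ Finset.univ.filter (fun i : Fin d → Fin N => i c = j),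
      (resid d N r T Q i) ^ 2

/-- `Q[c,j := v]`: replace the core vector of direction `c` at node `j` by `v`. -/
def updVec (d N r : ℕ) (Q : Fin d → Fin r → Fin N → ℝ) (c : Fin d) (j : Fin N)
    (v : Fin r → ℝ) : Fin d → Fin r → Fin N → ℝ :=
  fun s α k => if s = c ∧ k = j then v α else Q s α k

/-- `Q` with the single entry `Q c α j` replaced by `Q c α j + t`. -/
def updOne (d N r : ℕ) (Q : Fin d → Fin r → Fin N → ℝ) (c : Fin d) (α : Fin r)
    (j : Fin N) (t : ℝ) : Fin d → Fin r → Fin N → ℝ :=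
  fun s β k => if s = c ∧ β = α ∧ k = j then Q c α j + t else Q s β k
theorem second_deriv_local_discrepancy_eq_GaussNewton (d N r : ℕ) (hd : 0 < d)
    (hN : 0 < N) (hr : 0 < r) (T : (Fin d → Fin N) → ℝ)
    (Q : Fin d → Fin r → Fin N → ℝ) (c : Fin d) (j : Fin N)
    (H : Fin r → Fin r → ℝ)
    (hH : ∀ β γ : Fin r, H β γ =
      (1 / (N : ℝ) ^ (d - 1)) *
        ∑ i ∈ Finset.univ.filter (fun i : Fin d → Fin N => i c = j),
          (∏ s ∈ Finset.univ.erase c, Q s β (i s)) *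
            (∏ s ∈ Finset.univ.erase c, Q s γ (i s))) :
    ∀ (v : Fin r → ℝ) (β γ : Fin r),
      HasDerivAt
        (fun t : ℝ =>
          deriv
            (fun s : ℝ =>
              epsLocal d N r T
                (updVec d N r Q c j
                  (v + t • (Pi.single β 1 : Fin r → ℝ) + s • (Pi.single γ 1 : Fin r → ℝ))) c j) 0)
        (H β γ) 0 := by
  intro v β γ
  set C : ℝ := 1 / (2 * (N : ℝ) ^ (d - 1)) with hC
  set S := Finset.univ.filter (fun i : Fin d → Fin N => i c = j) with hS
  set P : Fin r → (Fin d → Fin N) → ℝ :=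
    fun α i => ∏ s ∈ Finset.univ.erase c, Q s α (i s) with hP
  set A : (Fin d → Fin N) → ℝ := fun i => (∑ α : Fin r, v α * P α i) - T i with hA
  have key : ∀ w : Fin r → ℝ,
      epsLocal d N r T (updVec d N r Q c j w) c j
        = C * ∑ i ∈ S, ((∑ α : Fin r, w α * P α i) - T i) ^ 2 := by
    intro w
    unfold epsLocal resid capF
    rw [← hC, ← hS]
    congr 1
    apply Finset.sum_congr rfl
    intro i hi
    have hic : i c = j := by
      rw [hS] at hi; simpa using (Finset.mem_filter.mp hi).2
    have hprod : ∀ α : Fin r,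
        ∏ s : Fin d, updVec d N r Q c j w s α (i s) = w α * P α i := by
      intro α
      rw [← Finset.mul_prod_erase Finset.univ _ (Finset.mem_univ c)]
      congr 1
      · simp [updVec, hic]
      · apply Finset.prod_congr rfl
        intro s hs
        have hne : s ≠ c := (Finset.mem_erase.mp hs).1
        simp [updVec, hne]
    rw [Finset.sum_congr rfl (fun α _ => hprod α)]
  have expand : ∀ (t u : ℝ) (i : Fin d → Fin N),
      (∑ α : Fin r, ((v + t • (Pi.single β 1 : Fin r → ℝ)
          + u • (Pi.single γ 1 : Fin r → ℝ)) α) * P α i)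
        = (∑ α : Fin r, v α * P α i) + t * P β i + u * P γ i := by
    intro t u i
    simp only [Pi.add_apply, Pi.smul_apply, smul_eq_mul, add_mul,
      Finset.sum_add_distrib, Pi.single_apply, ite_mul, one_mul, zero_mul,
      mul_ite, mul_zero, mul_one]
    rw [Finset.sum_ite_eq' Finset.univ β (fun α => t * P α i),
        Finset.sum_ite_eq' Finset.univ γ (fun α => u * P α i)]
    simp
  have inner : ∀ t : ℝ,
      deriv (fun u : ℝ =>
        epsLocal d N r T (updVec d N r Q c j
          (v + t • (Pi.single β 1 : Fin r → ℝ)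
            + u • (Pi.single γ 1 : Fin r → ℝ))) c j) 0
      = C * ∑ i ∈ S, 2 * (A i + t * P β i) * P γ i := by
    intro t
    have hfun : (fun u : ℝ =>
        epsLocal d N r T (updVec d N r Q c j
          (v + t • (Pi.single β 1 : Fin r → ℝ)
            + u • (Pi.single γ 1 : Fin r → ℝ))) c j)
        = fun u : ℝ => C * ∑ i ∈ S, (A i + t * P β i + u * P γ i) ^ 2 := by
      funext u
      rw [key, hA]
      congr 1
      apply Finset.sum_congr rfl
      intro i _
      rw [expand]
      ring
    rw [hfun]
    have hderiv : HasDerivAt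
        (fun u : ℝ => C * ∑ i ∈ S, (A i + t * P β i + u * P γ i) ^ 2)
        (C * ∑ i ∈ S, 2 * (A i + t * P β i) * P γ i) 0 := by
      apply HasDerivAt.const_mul
      apply HasDerivAt.fun_sum
      intro i _
      have h1 : HasDerivAt (fun u : ℝ => A i + t * P β i + u * P γ i) (P γ i) 0 := by
        simpa using ((hasDerivAt_id (0 : ℝ)).mul_const (P γ i)).const_add
          (A i + t * P β i)
      have h2 := h1.pow 2
      convert h2 using 1
      · rfl
      · funext u; simp
      · simp
    exact hderiv.deriv
  have hfun2 : (fun t : ℝ =>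
      deriv (fun u : ℝ =>
        epsLocal d N r T (updVec d N r Q c j
          (v + t • (Pi.single β 1 : Fin r → ℝ)
            + u • (Pi.single γ 1 : Fin r → ℝ))) c j) 0)
      = fun t : ℝ => C * ∑ i ∈ S, 2 * (A i + t * P β i) * P γ i := funext inner
  rw [hfun2]
  have hmain : HasDerivAt
      (fun t : ℝ => C * ∑ i ∈ S, 2 * (A i + t * P β i) * P γ i)
      (C * ∑ i ∈ S, 2 * P β i * P γ i) 0 := by
    apply HasDerivAt.const_mul
    apply HasDerivAt.fun_sum
    intro i _
    have h1 : HasDerivAt (fun t : ℝ => 2 * (A i + t * P β i) * P γ i)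
        (2 * P β i * P γ i) 0 := by
      have := (((hasDerivAt_id (0 : ℝ)).mul_const (P β i)).const_add
        (A i)).const_mul 2 |>.mul_const (P γ i)
      convert this using 1
      · rfl
      · rfl
      · funext u; simp
      · ring
    exact h1
  convert hmain using 1
  rw [hH β γ]
  have hNpow : ((N : ℝ)) ^ (d - 1) ≠ 0 := by positivity
  rw [hC, Finset.mul_sum, Finset.mul_sum]
  apply Finset.sum_congr rfl
  intro i _
  field_simp
  ring
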